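/- Under the MAR assumption, the terms R = 1_{T ≥ c} ρ − β and S = V · 1_{T ≥ c} · (D − ρ) are uncorrelated, where β = ℙ(T ≥ c, D = 1): both have mean zero and E[R · S] = 0, so Cov(R, S) = 0. -/

import Mathlib

open MeasureTheory ProbabilityTheory Filter
open scoped NNReal

section Aux

variable {Ω : Type*} [mΩ : MeasurableSpace Ω] {μ : Measure Ω}

lemma bdd_integrable [IsFiniteMeasure μ] {f : Ω → ℝ} (hf : AEStronglyMeasurable f μ)
    (C : ℝ) (h : ∀ ω, ‖f ω‖ ≤ C) : Integrable f μ :=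
  (integrable_const C).mono' hf (Eventually.of_forall h)

lemma key_zero [IsProbabilityMeasure μ]
    {V D : Ω → ℝ}
    (hD : Measurable D) (hV : Measurable V)
    (hDval : ∀ ω, D ω = 0 ∨ D ω = 1) (hVval : ∀ ω, V ω = 0 ∨ V ω = 1)
    (𝒢 : MeasurableSpace Ω) (h𝒢le : 𝒢 ≤ mΩ)
    (hVD : μ[V * D|𝒢] =ᵐ[μ] μ[V|𝒢] * μ[D|𝒢])
    {g : Ω → ℝ} (hg : StronglyMeasurable[𝒢] g) (C : ℝ)
    (hgC : ∀ᵐ ω ∂μ, ‖g ω‖ ≤ C) :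
    ∫ ω, g ω * (V ω * (D ω - (μ[D|𝒢]) ω)) ∂μ = 0 := by
  set ρ := μ[D|𝒢] with hρdef
  have hDb : ∀ ω, ‖D ω‖ ≤ 1 := fun ω => by rcases hDval ω with h | h <;> simp [h]
  have hVb : ∀ ω, ‖V ω‖ ≤ 1 := fun ω => by rcases hVval ω with h | h <;> simp [h]
  have hρb : ∀ᵐ ω ∂μ, |ρ ω| ≤ ((1 : ℝ≥0) : ℝ) :=
    ae_bdd_condExp_of_ae_bdd (R := 1) (Eventually.of_forall fun ω => by
      simpa [Real.norm_eq_abs] using hDb ω)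
  have hρ_meas : AEStronglyMeasurable[mΩ] ρ μ :=
    (stronglyMeasurable_condExp.mono h𝒢le).aestronglyMeasurable
  have hD_int : Integrable D μ := (integrable_const (μ := μ) (1:ℝ)).mono' (hD.aestronglyMeasurable (μ := μ)) (Eventually.of_forall hDb)
  have hV_int : Integrable V μ := (integrable_const (μ := μ) (1:ℝ)).mono' (hV.aestronglyMeasurable (μ := μ)) (Eventually.of_forall hVb)
  have hρ_int : Integrable ρ μ := integrable_condExp
  have hVD_int : Integrable (V * D) μ := hD_int.bdd_mul (hV.aestronglyMeasurable (μ := μ)) (Eventually.of_forall hVb)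
  have hρV_int : Integrable (ρ * V) μ := by
    refine hρ_int.mono (hρ_meas.mul (hV.aestronglyMeasurable (μ := μ))) ?_
    refine Eventually.of_forall fun ω => ?_
    have : ‖ρ ω * V ω‖ = ‖ρ ω‖ * ‖V ω‖ := norm_mul _ _
    rw [Pi.mul_apply, this]
    calc ‖ρ ω‖ * ‖V ω‖ ≤ ‖ρ ω‖ * 1 :=
          mul_le_mul_of_nonneg_left (hVb ω) (norm_nonneg _)
      _ = ‖ρ ω‖ := mul_one _
  have h_sub_int : Integrable (fun ω => V ω * (D ω - ρ ω)) μ :=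
    (hD_int.sub hρ_int).bdd_mul (hV.aestronglyMeasurable (μ := μ)) (Eventually.of_forall hVb)
  have hgmul_int : Integrable (fun ω => g ω * (V ω * (D ω - ρ ω))) μ := by
    refine (h_sub_int.norm.const_mul C).mono'
      (((hg.mono h𝒢le).aestronglyMeasurable).mul h_sub_int.aestronglyMeasurable) ?_
    filter_upwards [hgC] with ω hω
    rw [norm_mul]
    exact mul_le_mul_of_nonneg_right hω (norm_nonneg _)
  have h2 : μ[fun ω => g ω * (V ω * (D ω - ρ ω))|𝒢]
      =ᵐ[μ] g * μ[fun ω => V ω * (D ω - ρ ω)|𝒢] :=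
    condExp_stronglyMeasurable_mul_of_bound h𝒢le hg h_sub_int C hgC
  have h3 : μ[fun ω => V ω * (D ω - ρ ω)|𝒢] =ᵐ[μ] 0 := by
    have heq : (fun ω => V ω * (D ω - ρ ω)) = V * D - ρ * V := by
      funext ω
      simp only [Pi.sub_apply, Pi.mul_apply]
      ring
    rw [heq]
    have h4 : μ[V * D - ρ * V|𝒢] =ᵐ[μ] μ[V * D|𝒢] - μ[ρ * V|𝒢] :=
      condExp_sub hVD_int hρV_int 𝒢
    have h5 : μ[ρ * V|𝒢] =ᵐ[μ] ρ * μ[V|𝒢] :=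
      condExp_stronglyMeasurable_mul_of_bound h𝒢le stronglyMeasurable_condExp hV_int 1
        (by filter_upwards [hρb] with ω h using by simpa [Real.norm_eq_abs] using h)
    refine h4.trans ?_
    filter_upwards [hVD, h5] with ω h1 h2'
    simp only [Pi.sub_apply, Pi.mul_apply, Pi.zero_apply] at *
    rw [h1, h2']
    ring
  calc ∫ ω, g ω * (V ω * (D ω - ρ ω)) ∂μ
      = ∫ ω, (μ[fun ω => g ω * (V ω * (D ω - ρ ω))|𝒢]) ω ∂μ :=
        (integral_condExp h𝒢le).symm
    _ = 0 := by
        have hz : μ[fun ω => g ω * (V ω * (D ω - ρ ω))|𝒢] =ᵐ[μ] 0 := by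
          refine h2.trans ?_
          filter_upwards [h3] with ω h
          simp [Pi.mul_apply, h]
        rw [integral_congr_ae hz]; simp

end Aux

/-- Under MAR, the terms `R = 1_{T ≥ c} ρ − β` and
`S = V · 1_{T ≥ c} · (D − ρ)`, with `β = ℙ(T ≥ c, D = 1)`, are uncorrelated:
both have mean zero and `E[R · S] = 0`, so `Cov(R, S) = 0`. -/
theorem mar_R_S_uncorrelated
    {Ω : Type*} [mΩ : MeasurableSpace Ω] [StandardBorelSpace Ω] [Nonempty Ω]
    (μ : Measure Ω) [IsProbabilityMeasure μ] {d : ℕ}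
    (T : Ω → ℝ) (A : Ω → (Fin d → ℝ)) (D V : Ω → ℝ)
    (hT : Measurable T) (hA : Measurable A) (hD : Measurable D) (hV : Measurable V)
    (hDval : ∀ ω, D ω = 0 ∨ D ω = 1) (hVval : ∀ ω, V ω = 0 ∨ V ω = 1)
    (𝒢 : MeasurableSpace Ω)
    (h𝒢 : 𝒢 = MeasurableSpace.comap (fun ω => (T ω, A ω)) inferInstance)
    (h𝒢le : 𝒢 ≤ mΩ)
    (MAR : CondIndepFun (mΩ := mΩ) 𝒢 h𝒢le V D μ) (c : ℝ) :
    (∫ ω, ((if c ≤ T ω then (1 : ℝ) else 0) * (μ[D | 𝒢]) ω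
        - (μ {ω' | c ≤ T ω' ∧ D ω' = 1}).toReal) ∂μ = 0) ∧
    (∫ ω, V ω * (if c ≤ T ω then (1 : ℝ) else 0) * (D ω - (μ[D | 𝒢]) ω) ∂μ = 0) ∧
    (∫ ω, ((if c ≤ T ω then (1 : ℝ) else 0) * (μ[D | 𝒢]) ω
          - (μ {ω' | c ≤ T ω' ∧ D ω' = 1}).toReal)
        * (V ω * (if c ≤ T ω then (1 : ℝ) else 0) * (D ω - (μ[D | 𝒢]) ω)) ∂μ = 0) := by
  -- abbreviations
  set ρ := μ[D|𝒢] with hρdef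
  set β : ℝ := (μ {ω' | c ≤ T ω' ∧ D ω' = 1}).toReal with hβdef
  -- basic bounds and integrability
  have hDb : ∀ ω, ‖D ω‖ ≤ 1 := fun ω => by rcases hDval ω with h | h <;> simp [h]
  have hρb : ∀ᵐ ω ∂μ, |ρ ω| ≤ ((1 : ℝ≥0) : ℝ) :=
    ae_bdd_condExp_of_ae_bdd (R := 1) (Eventually.of_forall fun ω => by
      simpa [Real.norm_eq_abs] using hDb ω)
  have hD_int : Integrable D μ :=
    (integrable_const (μ := μ) (1:ℝ)).mono' (hD.aestronglyMeasurable (μ := μ))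
      (Eventually.of_forall hDb)
  -- 𝒢-measurability of the threshold indicator
  have hpair : Measurable[𝒢] (fun ω => (T ω, A ω)) := by
    rw [h𝒢]; exact Measurable.of_comap_le le_rfl
  have hT𝒢 : Measurable[𝒢] T := measurable_fst.comp hpair
  have hSet : MeasurableSet[𝒢] {ω | c ≤ T ω} := hT𝒢 measurableSet_Ici
  have hI : (fun ω => if c ≤ T ω then (1 : ℝ) else 0)
      = Set.indicator {ω | c ≤ T ω} (fun _ => (1 : ℝ)) := by
    funext ω
    by_cases h : c ≤ T ω <;> simp [Set.indicator_apply, h]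
  have hI_sm : StronglyMeasurable[𝒢] (fun ω => if c ≤ T ω then (1 : ℝ) else 0) := by
    rw [hI]; exact stronglyMeasurable_const.indicator hSet
  -- the MAR consequence : E[VD|𝒢] = E[V|𝒢] E[D|𝒢]
  have hVind : V = Set.indicator (V ⁻¹' {1}) (fun _ => (1 : ℝ)) := by
    funext ω
    rcases hVval ω with h | h <;>
      simp [Set.indicator_apply, Set.mem_preimage, h]
  have hDind : D = Set.indicator (D ⁻¹' {1}) (fun _ => (1 : ℝ)) := by
    funext ω
    rcases hDval ω with h | h <;>
      simp [Set.indicator_apply, Set.mem_preimage, h]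
  have hVDind : V * D = Set.indicator (V ⁻¹' {1} ∩ D ⁻¹' {1}) (fun _ => (1 : ℝ)) := by
    funext ω
    rcases hVval ω with h | h <;> rcases hDval ω with h' | h' <;>
      simp [Set.indicator_apply, Set.mem_preimage, h, h']
  have hMAR := (condIndepFun_iff (m' := 𝒢) (hm' := h𝒢le) V D hV hD μ).mp MAR
    (V ⁻¹' {1}) (D ⁻¹' {1}) ⟨{1}, measurableSet_singleton 1, rfl⟩
    ⟨{1}, measurableSet_singleton 1, rfl⟩
  have hVD : μ[V * D|𝒢] =ᵐ[μ] μ[V|𝒢] * μ[D|𝒢] := by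
    calc μ[V * D|𝒢] = μ⟦V ⁻¹' {1} ∩ D ⁻¹' {1}|𝒢⟧ := by rw [hVDind]
      _ =ᵐ[μ] (μ⟦V ⁻¹' {1}|𝒢⟧) * (μ⟦D ⁻¹' {1}|𝒢⟧) := hMAR
      _ = μ[V|𝒢] * μ[D|𝒢] := by rw [← hVind, ← hDind]
  -- Part 2 : E[V I (D - ρ)] = 0
  have part2 : ∫ ω, V ω * (if c ≤ T ω then (1 : ℝ) else 0) * (D ω - ρ ω) ∂μ = 0 := by
    have hk := key_zero (mΩ := mΩ) (μ := μ) hD hV hDval hVval 𝒢 h𝒢le hVD hI_sm 1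
      (Eventually.of_forall fun ω => by by_cases h : c ≤ T ω <;> simp [h])
    refine Eq.trans ?_ hk
    apply integral_congr_ae
    filter_upwards with ω
    ring
  -- Part 1 : E[I ρ - β] = 0
  have hmul : μ[fun ω => (if c ≤ T ω then (1 : ℝ) else 0) * D ω|𝒢]
      =ᵐ[μ] (fun ω => if c ≤ T ω then (1 : ℝ) else 0) * μ[D|𝒢] :=
    condExp_stronglyMeasurable_mul_of_bound h𝒢le hI_sm hD_int 1
      (Eventually.of_forall fun ω => by by_cases h : c ≤ T ω <;> simp [h])
  have hsmeas : MeasurableSet[mΩ] {ω | c ≤ T ω ∧ D ω = 1} := by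
    have : {ω | c ≤ T ω ∧ D ω = 1} = {ω | c ≤ T ω} ∩ D ⁻¹' {1} := by
      ext ω; simp [Set.mem_preimage]
    rw [this]
    exact (hT measurableSet_Ici).inter (hD (measurableSet_singleton 1))
  have hID : (fun ω => (if c ≤ T ω then (1 : ℝ) else 0) * D ω)
      = Set.indicator {ω | c ≤ T ω ∧ D ω = 1} (fun _ => (1 : ℝ)) := by
    funext ω
    rcases hDval ω with h | h <;> by_cases h' : c ≤ T ω <;>
      simp [Set.indicator_apply, h, h']
  have hIρ : ∫ ω, (if c ≤ T ω then (1 : ℝ) else 0) * ρ ω ∂μ = β := by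
    calc ∫ ω, (if c ≤ T ω then (1 : ℝ) else 0) * ρ ω ∂μ
        = ∫ ω, (μ[fun ω => (if c ≤ T ω then (1 : ℝ) else 0) * D ω|𝒢]) ω ∂μ := by
          refine (integral_congr_ae ?_).symm
          filter_upwards [hmul] with ω h
          rw [h]; rfl
      _ = ∫ ω, (if c ≤ T ω then (1 : ℝ) else 0) * D ω ∂μ := integral_condExp h𝒢le
      _ = ∫ ω, Set.indicator {ω | c ≤ T ω ∧ D ω = 1} (fun _ => (1 : ℝ)) ω ∂μ := by
          rw [← hID]
      _ = β := @integral_indicator_one Ω mΩ μ _ hsmeas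
  have hint1 : Integrable (fun ω => (if c ≤ T ω then (1 : ℝ) else 0) * ρ ω) μ := by
    refine integrable_condExp.bdd_mul (c := 1)
      ((hI_sm.mono h𝒢le).aestronglyMeasurable) (Eventually.of_forall fun ω => ?_)
    by_cases h : c ≤ T ω <;> simp [h]
  have part1 : ∫ ω, ((if c ≤ T ω then (1 : ℝ) else 0) * ρ ω - β) ∂μ = 0 := by
    rw [integral_sub hint1 (integrable_const β), hIρ, integral_const]
    simp
  -- Part 3
  have part3 : ∫ ω, ((if c ≤ T ω then (1 : ℝ) else 0) * ρ ω - β)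
      * (V ω * (if c ≤ T ω then (1 : ℝ) else 0) * (D ω - ρ ω)) ∂μ = 0 := by
    have hg_sm : StronglyMeasurable[𝒢]
        (fun ω => ((if c ≤ T ω then (1 : ℝ) else 0) * ρ ω - β)
          * (if c ≤ T ω then (1 : ℝ) else 0)) :=
      ((hI_sm.mul stronglyMeasurable_condExp).sub stronglyMeasurable_const).mul hI_sm
    have hgC : ∀ᵐ ω ∂μ, ‖((if c ≤ T ω then (1 : ℝ) else 0) * ρ ω - β)
        * (if c ≤ T ω then (1 : ℝ) else 0)‖ ≤ 1 + |β| := by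
      filter_upwards [hρb] with ω hω
      have hβ0 : (0:ℝ) ≤ |β| := abs_nonneg β
      have hω1 : |ρ ω| ≤ 1 := by simpa using hω
      by_cases h : c ≤ T ω
      · simp only [h, if_pos, one_mul, mul_one, Real.norm_eq_abs]
        have h1 : |ρ ω - β| ≤ |ρ ω| + |β| := by
          have := abs_add_le (ρ ω) (-β)
          simpa [sub_eq_add_neg] using this
        linarith
      · simp only [h, if_neg, if_false, mul_zero, norm_zero]
        linarith
    have hk := key_zero (mΩ := mΩ) (μ := μ) hD hV hDval hVval 𝒢 h𝒢le hVD hg_sm (1 + |β|) hgC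
    refine Eq.trans ?_ hk
    apply integral_congr_ae
    filter_upwards with ω
    ring
  exact ⟨part1, part2, part3⟩
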